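/- Let c_1,…,c_n be reals with c_1 = 0 and let d_1,…,d_n be reals with d_1 = d_n = 1. Set A = F·D. Then for every 1 ≤ i ≤ n, Σ_{j=1}^{n} A_{ij} = c_i; that is, the row sums of A equal the nodes c_i. -/

import Mathlib

open Finset Matrix

lemma telescope (f : ℕ → ℝ) : ∀ m : ℕ,
    ∑ j ∈ Finset.range m, f j * ∏ k ∈ Finset.Ioo j m, (1 - f k)
      = 1 - ∏ j ∈ Finset.range m, (1 - f j) := by
  intro m
  induction m with
  | zero => simp
  | succ m ih =>
    rw [Finset.sum_range_succ, Finset.prod_range_succ]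
    have h1 : ∀ j ∈ Finset.range m, f j * ∏ k ∈ Finset.Ioo j (m+1), (1 - f k)
        = (f j * ∏ k ∈ Finset.Ioo j m, (1 - f k)) * (1 - f m) := by
      intro j hj
      rw [Finset.mem_range] at hj
      have h2 : Finset.Ioo j (m+1) = insert m (Finset.Ioo j m) := by
        ext x; simp [Finset.mem_Ioo, Finset.mem_insert]; omega
      rw [h2, Finset.prod_insert (by simp)]
      ring
    rw [Finset.sum_congr rfl h1, ← Finset.sum_mul, ih]
    have h3 : Finset.Ioo m (m+1) = ∅ := by
      ext x; simp
    rw [h3]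
    simp
    ring

/-- The matrix `D` with entries `d_{ij}`: `0` for `i < j`, `d_i` for `i = j`, and
`-d_j · (∏_{k=j+1}^{i-1} (1 - d_k)) · d_i` for `i > j`. -/
def Dmat (n : ℕ) (d : Fin n → ℝ) : Matrix (Fin n) (Fin n) ℝ :=
  Matrix.of fun i j =>
    if i < j then 0
    else if i = j then d i
    else -(d j) * (∏ k ∈ Finset.Ioo j i, (1 - d k)) * d i

/-- The matrix `F` with `F_{ij} = c_i - c_j` for `i > j` and `0` otherwise. -/
def Fmat (n : ℕ) (c : Fin n → ℝ) : Matrix (Fin n) (Fin n) ℝ :=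
  Matrix.of fun i j => if j < i then c i - c j else 0

lemma rowsumD (n : ℕ) (hn : 2 ≤ n) (d : Fin n → ℝ) (hd1 : d ⟨0, by linarith⟩ = 1)
    (k : Fin n) : ∑ j, Dmat n d k j = if k = ⟨0, by linarith⟩ then 1 else 0 := by
  classical
  set f : ℕ → ℝ := fun m => if h : m < n then d ⟨m, h⟩ else 0 with hf
  have hsub : ∑ j, Dmat n d k j = ∑ j ∈ Finset.Iic k, Dmat n d k j := by
    refine (Finset.sum_subset (Finset.subset_univ _) ?_).symm
    intro x _ hx
    rw [Finset.mem_Iic, not_le] at hx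
    simp [Dmat, hx]
  have hins : Finset.Iic k = insert k (Finset.Iio k) := by
    ext x; simp [Finset.mem_Iic, Finset.mem_Iio, Finset.mem_insert, le_iff_lt_or_eq, or_comm]
  have hdkk : Dmat n d k k = d k := by simp [Dmat]
  have hval : ∀ j ∈ Finset.Iio k, Dmat n d k j
      = -(d j) * (∏ m ∈ Finset.Ioo j k, (1 - d m)) * d k := by
    intro j hj
    rw [Finset.mem_Iio] at hj
    simp [Dmat, hj.ne', not_lt_of_gt hj, hj.ne.symm]
  have hmap : ∑ j ∈ Finset.Iio k, d j * ∏ m ∈ Finset.Ioo j k, (1 - d m)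
      = ∑ j ∈ Finset.range k.val, f j * ∏ m ∈ Finset.Ioo j k.val, (1 - f m) := by
    rw [Finset.range_eq_Ico]
    rw [show Finset.Ico 0 k.val = Finset.Iio k.val by ext x; simp]
    rw [← Fin.map_valEmbedding_Iio, Finset.sum_map]
    refine Finset.sum_congr rfl ?_
    intro j hj
    rw [Finset.mem_Iio] at hj
    have hjn : (j : ℕ) < n := j.isLt
    simp only [Fin.valEmbedding_apply]
    rw [show f j.val = d j by simp [hf, j.isLt], ← Fin.map_valEmbedding_Ioo,
      Finset.prod_map]
    refine congrArg _ (Finset.prod_congr rfl fun m _ => ?_)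
    simp [hf, m.isLt]
  by_cases hk : k = ⟨0, by omega⟩
  · subst hk
    rw [hsub, hins, Finset.sum_insert (by simp), hdkk]
    have : Finset.Iio (⟨0, by omega⟩ : Fin n) = ∅ := by
      ext x; simp [Finset.mem_Iio, Fin.lt_def]
    rw [this]
    simp [hd1]
  · have hk0 : 0 < k.val := by
      rcases Nat.eq_zero_or_pos k.val with h | h
      · exact absurd (Fin.ext h) hk
      · exact h
    have hprod : ∏ j ∈ Finset.range k.val, (1 - f j) = 0 := by
      refine Finset.prod_eq_zero (Finset.mem_range.mpr hk0) ?_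
      have : f 0 = 1 := by simp [hf, show (0:ℕ) < n by omega, hd1]
      rw [this]; ring
    rw [hsub, hins, Finset.sum_insert (by simp), hdkk,
      Finset.sum_congr rfl hval]
    have hstep : ∀ j ∈ Finset.Iio k, -(d j) * (∏ m ∈ Finset.Ioo j k, (1 - d m)) * d k
        = -(d j * (∏ m ∈ Finset.Ioo j k, (1 - d m)) * d k) := fun j _ => by ring
    rw [Finset.sum_congr rfl hstep, Finset.sum_neg_distrib, ← Finset.sum_mul,
      hmap, telescope, hprod, if_neg hk]
    ring

theorem stmt_11 (n : ℕ) (hn : 2 ≤ n) (c d : Fin n → ℝ)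
    (hc1 : c ⟨0, by omega⟩ = 0)
    (hd1 : d ⟨0, by omega⟩ = 1) (hdn : d ⟨n - 1, by omega⟩ = 1) :
    ∀ i : Fin n, ∑ j : Fin n, (Fmat n c * Dmat n d) i j = c i := by
  intro i
  have h1 : ∑ j : Fin n, (Fmat n c * Dmat n d) i j
      = ∑ k : Fin n, Fmat n c i k * ∑ j : Fin n, Dmat n d k j := by
    simp only [Matrix.mul_apply, Finset.mul_sum]
    exact Finset.sum_comm
  rw [h1]
  have h2 : ∀ k : Fin n, Fmat n c i k * ∑ j : Fin n, Dmat n d k j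
      = if k = ⟨0, by omega⟩ then Fmat n c i k else 0 := by
    intro k
    rw [rowsumD n hn d hd1 k]
    split <;> simp
  rw [Finset.sum_congr rfl fun k _ => h2 k, Finset.sum_ite_eq' Finset.univ
    (⟨0, by omega⟩ : Fin n) (fun k => Fmat n c i k)]
  simp only [Finset.mem_univ, if_true]
  by_cases hi : i = ⟨0, by omega⟩
  · subst hi
    simp [Fmat, hc1]
  · have : (⟨0, by omega⟩ : Fin n) < i := by
      rcases Nat.eq_zero_or_pos i.val with h | h
      · exact absurd (Fin.ext h) hi
      · exact Fin.lt_def.mpr h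
    simp [Fmat, this, hc1]
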